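/- Define the sequence $J_2(m)$ by $J_2(0) = \zeta(2,1/2) = \pi^2/2$ and the property that $\int_{[0,1]^2} \frac{4\, du_1 du_2}{\sqrt{(1-u_1^2u_2^2)^2 + q^2 (1-u_1^4)(1-u_2^4)}} = \sum_{m=0}^{\infty} \binom{-1/2}{m} J_2(m) q^{2m}$ for small $q > 0$, i.e. $J_2(m) = \int_{[0,1]^2} \frac{4 (1-u_1^4)^m (1-u_2^4)^m}{(1-u_1^2 u_2^2)^{2m+1}}\, du_1 du_2$. Then for all $m \ge 2$: $4m^2 J_2(m) - (8m^2 - 8m + 3) J_2(m-1) + 4(m-1)^2 J_2(m-2) = 0$. -/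

import Mathlib

open MeasureTheory Set Real

noncomputable section

def P3 (k : ℕ) (u v : ℝ) : ℝ :=
  -((k:ℝ)+1)*v^3 + u*((2*(k:ℝ)+5)*v^2 - 2*v^3 + v^4/4) + u^2*(-((k:ℝ)+2)*v + v^3/4)

def P3u (k : ℕ) (u v : ℝ) : ℝ :=
  ((2*(k:ℝ)+5)*v^2 - 2*v^3 + v^4/4) + 2*u*(-((k:ℝ)+2)*v + v^3/4)

def pp (k : ℕ) (x y : ℝ) : ℝ := x * P3 k (1-x^2) (1-y^2)

def ppx (k : ℕ) (x y : ℝ) : ℝ :=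
  P3 k (1-x^2) (1-y^2) - 2*x^2 * P3u k (1-x^2) (1-y^2)

def tt (k : ℕ) (x y : ℝ) : ℝ :=
  (-(4*((k:ℝ)+1))*x^3*pp k x y + (1-x^4)*ppx k x y)*(1-x^2*y^2)
    + (4*(k:ℝ)+8)*x*y^2*(1-x^4)*pp k x y

def PP (k : ℕ) (x y : ℝ) : ℝ :=
  4*(1-x^4)^(k+1)*(1-y^4)^k*pp k x y/(1-x^2*y^2)^(2*k+4)

def PX (k : ℕ) (x y : ℝ) : ℝ :=
  4*((1-x^4)^k*(1-y^4)^k*tt k x y)/(1-x^2*y^2)^(2*k+5)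

def gg (j : ℕ) (x y : ℝ) : ℝ :=
  4 * (1 - x ^ 4) ^ j * (1 - y ^ 4) ^ j / (1 - x ^ 2 * y ^ 2) ^ (2 * j + 1)

lemma hasDerivAt_P3 (k : ℕ) (v u₀ : ℝ) :
    HasDerivAt (fun u => P3 k u v) (P3u k u₀ v) u₀ := by
  have h1 : HasDerivAt (fun u : ℝ => u) 1 u₀ := hasDerivAt_id u₀
  have h2 : HasDerivAt (fun u : ℝ => u^2) (2*u₀) u₀ := by simpa using hasDerivAt_pow 2 u₀
  have h := ((h1.mul_const ((2*(k:ℝ)+5)*v^2 - 2*v^3 + v^4/4)).const_add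
      (-((k:ℝ)+1)*v^3)).add (h2.mul_const (-((k:ℝ)+2)*v + v^3/4))
  unfold P3 P3u
  exact h.congr_deriv (by ring)

lemma hasDerivAt_pp (k : ℕ) (y x : ℝ) :
    HasDerivAt (fun x => pp k x y) (ppx k x y) x := by
  have hu : HasDerivAt (fun x : ℝ => 1 - x^2) (-(2*x)) x := by
    simpa using ((hasDerivAt_pow 2 x).const_sub 1)
  have h3 : HasDerivAt (fun x : ℝ => P3 k (1-x^2) (1-y^2))
      (P3u k (1-x^2) (1-y^2) * (-(2*x))) x :=
    by have := (hasDerivAt_P3 k (1-y^2) (1-x^2)).comp x hu; exact this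
  have h1 : HasDerivAt (fun x : ℝ => x) 1 x := hasDerivAt_id x
  have h := h1.mul h3
  unfold pp ppx
  exact h.congr_deriv (by ring)

lemma hasDerivAt_PP (k : ℕ) (y x : ℝ) (hD : (1:ℝ) - x^2*y^2 ≠ 0) :
    HasDerivAt (fun x => PP k x y) (PX k x y) x := by
  have hu : HasDerivAt (fun x : ℝ => 1 - x^4) (-(4*x^3)) x := by
    simpa using ((hasDerivAt_pow 4 x).const_sub 1)
  have hA : HasDerivAt (fun x : ℝ => (1-x^4)^(k+1))
      (((↑k+1) * (1-x^4)^k) * (-(4*x^3))) x := by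
    have := ((hasDerivAt_pow (k+1) (1-x^4)).comp x hu)
    exact this.congr_deriv (by push_cast; ring_nf)
  have hnum : HasDerivAt (fun x : ℝ => 4*(1-x^4)^(k+1)*(1-y^4)^k*pp k x y)
      ((4*((((k:ℝ)+1) * (1-x^4)^k) * (-(4*x^3)))*(1-y^4)^k) * pp k x y
        + (4*(1-x^4)^(k+1)*(1-y^4)^k) * ppx k x y) x := by
    have h := ((hA.const_mul 4).mul_const ((1-y^4)^k)).mul (hasDerivAt_pp k y x)
    exact h
  have hd : HasDerivAt (fun x : ℝ => 1 - x^2*y^2) (-(2*x*y^2)) x := by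
    simpa using (((hasDerivAt_pow 2 x).mul_const (y^2)).const_sub 1)
  have hden : HasDerivAt (fun x : ℝ => (1-x^2*y^2)^(2*k+4))
      ((((2*(k:ℝ)+4)) * (1-x^2*y^2)^(2*k+3)) * (-(2*x*y^2))) x := by
    have := ((hasDerivAt_pow (2*k+4) (1-x^2*y^2)).comp x hd)
    exact this.congr_deriv (by push_cast; ring_nf)
  have hdiv := hnum.div hden (pow_ne_zero _ hD)
  refine hdiv.congr_deriv ?_
  symm
  unfold PX tt
  field_simp
  ring

lemma certificate (k : ℕ) (x y : ℝ) (hD : (1:ℝ) - x^2*y^2 ≠ 0) :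
    PX k x y + PX k y x
      = 4*((k:ℝ)+2)^2 * gg (k+2) x y - (8*((k:ℝ)+2)^2 - 8*((k:ℝ)+2) + 3) * gg (k+1) x y
        + 4*((k:ℝ)+1)^2 * gg k x y := by
  have hD' : (1:ℝ) - y^2*x^2 ≠ 0 := by rw [mul_comm]; exact hD
  unfold PX gg tt pp ppx P3 P3u
  field_simp
  ring

lemma P3_bound (k : ℕ) (u v : ℝ) (hu0 : 0 ≤ u) (hu1 : u ≤ 1) (hv0 : 0 ≤ v) (hv1 : v ≤ 1) :
    |P3 k u v| ≤ (2*(k:ℝ)+8)*v*(u+v)^2 := by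
  have hk : (0:ℝ) ≤ k := Nat.cast_nonneg k
  rw [abs_le]
  constructor <;> unfold P3 <;>
    nlinarith [mul_nonneg hu0 hv0, mul_nonneg (mul_nonneg hu0 hu0) hv0,
      mul_nonneg (mul_nonneg hv0 hv0) hv0, mul_nonneg (mul_nonneg hu0 hv0) hv0,
      mul_nonneg (mul_nonneg (mul_nonneg hu0 hv0) hv0) hv0,
      mul_nonneg (mul_nonneg (mul_nonneg hu0 hu0) hv0) hv0,
      mul_nonneg (mul_nonneg (mul_nonneg hu0 hv0) hv0) (sub_nonneg.2 hv1),
      mul_nonneg (mul_nonneg (mul_nonneg hu0 hu0) hv0) (sub_nonneg.2 hv1),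
      mul_nonneg (mul_nonneg (mul_nonneg hv0 hv0) hv0) (sub_nonneg.2 hv1),
      mul_nonneg (mul_nonneg (mul_nonneg (mul_nonneg hu0 hv0) hv0) hv0) (sub_nonneg.2 hv1),
      mul_nonneg hk (mul_nonneg (mul_nonneg hu0 hv0) hv0),
      mul_nonneg hk (mul_nonneg (mul_nonneg hu0 hu0) hv0),
      mul_nonneg hk (mul_nonneg (mul_nonneg hv0 hv0) hv0),
      mul_nonneg (mul_nonneg hk (mul_nonneg (mul_nonneg hu0 hv0) hv0)) (sub_nonneg.2 hv1),
      mul_nonneg (mul_nonneg hk (mul_nonneg (mul_nonneg hv0 hv0) hv0)) (sub_nonneg.2 hv1)]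

lemma P3u_bound (k : ℕ) (u v : ℝ) (hu0 : 0 ≤ u) (hu1 : u ≤ 1) (hv0 : 0 ≤ v) (hv1 : v ≤ 1) :
    |P3u k u v| ≤ (2*(k:ℝ)+8)*v*(u+v) := by
  have hk : (0:ℝ) ≤ k := Nat.cast_nonneg k
  rw [abs_le]
  constructor <;> unfold P3u <;>
    nlinarith [mul_nonneg hu0 hv0, mul_nonneg hv0 hv0,
      mul_nonneg (mul_nonneg hu0 hv0) hv0,
      mul_nonneg (mul_nonneg hv0 hv0) (sub_nonneg.2 hv1),
      mul_nonneg (mul_nonneg (mul_nonneg hv0 hv0) hv0) (sub_nonneg.2 hv1),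
      mul_nonneg (mul_nonneg (mul_nonneg hu0 hv0) hv0) (sub_nonneg.2 hv1),
      mul_nonneg hk (mul_nonneg hu0 hv0), mul_nonneg hk (mul_nonneg hv0 hv0),
      mul_nonneg (mul_nonneg hk (mul_nonneg hv0 hv0)) (sub_nonneg.2 hv1)]

lemma tt_aux (k : ℕ) (x y2 u v A D P Q : ℝ)
    (hx0 : 0 ≤ x) (hx1 : x ≤ 1) (hy0 : 0 ≤ y2) (hy1 : y2 ≤ 1)
    (hu0 : 0 ≤ u) (hv0 : 0 ≤ v) (hs2 : u+v ≤ 2)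
    (hA0 : 0 ≤ A) (hA2 : A ≤ 2*u) (hD0 : 0 ≤ D) (hDs : D ≤ u+v)
    (hP : |P| ≤ (2*(k:ℝ)+8)*v*(u+v)^2) (hQ : |Q| ≤ (2*(k:ℝ)+8)*v*(u+v)) :
    |(-(4*((k:ℝ)+1))*x^3*(x*P) + A*(P - 2*x^2*Q))*D + (4*(k:ℝ)+8)*x*y2*A*(x*P)|
      ≤ (2*(k:ℝ)+8)*(12*(k:ℝ)+28)*(u+v)^4 := by
  have hk : (0:ℝ) ≤ k := Nat.cast_nonneg k
  have hs0 : (0:ℝ) ≤ u + v := by linarith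
  have hx2 : x^2 ≤ 1 := by nlinarith
  have hx3 : x^3 ≤ 1 := by nlinarith
  have hx30 : 0 ≤ x^3 := by positivity
  have hxP : |x*P| ≤ (2*(k:ℝ)+8)*v*(u+v)^2 := by
    rw [abs_mul, abs_of_nonneg hx0]
    calc x * |P| ≤ 1 * ((2*(k:ℝ)+8)*v*(u+v)^2) :=
          mul_le_mul hx1 hP (abs_nonneg _) zero_le_one
      _ = _ := one_mul _
  have hpqx : |P - 2*x^2*Q| ≤ (2*(k:ℝ)+8)*v*(u+v)^2 + 2*((2*(k:ℝ)+8)*v*(u+v)) := by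
    refine (abs_sub _ _).trans (add_le_add hP ?_)
    rw [abs_mul, abs_mul, abs_two, abs_of_nonneg (by positivity : (0:ℝ) ≤ x^2)]
    calc 2 * x^2 * |Q| ≤ 2 * 1 * ((2*(k:ℝ)+8)*v*(u+v)) := by
          refine mul_le_mul ?_ hQ (abs_nonneg _) (by norm_num)
          linarith
      _ = 2*((2*(k:ℝ)+8)*v*(u+v)) := by ring
  have h_a : |(-(4*((k:ℝ)+1))*x^3*(x*P))| ≤ 4*((k:ℝ)+1)*((2*(k:ℝ)+8)*v*(u+v)^2) := by
    rw [abs_mul, abs_mul, abs_neg, abs_of_nonneg (by positivity : (0:ℝ) ≤ 4*((k:ℝ)+1)),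
      mul_assoc]
    refine mul_le_mul_of_nonneg_left ?_ (by positivity)
    rw [abs_of_nonneg hx30]
    calc x^3 * |x*P| ≤ 1 * ((2*(k:ℝ)+8)*v*(u+v)^2) :=
          mul_le_mul hx3 hxP (abs_nonneg _) zero_le_one
      _ = _ := one_mul _
  have h_b : |A*(P - 2*x^2*Q)| ≤ 2*u*((2*(k:ℝ)+8)*v*(u+v)^2 + 2*((2*(k:ℝ)+8)*v*(u+v))) := by
    rw [abs_mul, abs_of_nonneg hA0]
    exact mul_le_mul hA2 hpqx (abs_nonneg _) (by positivity)
  have h1 : |(-(4*((k:ℝ)+1))*x^3*(x*P) + A*(P - 2*x^2*Q))*D|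
      ≤ (4*((k:ℝ)+1)*((2*(k:ℝ)+8)*v*(u+v)^2)
          + 2*u*((2*(k:ℝ)+8)*v*(u+v)^2 + 2*((2*(k:ℝ)+8)*v*(u+v))))*(u+v) := by
    rw [abs_mul]
    refine mul_le_mul ((abs_add_le _ _).trans (add_le_add h_a h_b)) ?_ (abs_nonneg _)
      (by positivity)
    rw [abs_of_nonneg hD0]; exact hDs
  have h2 : |(4*(k:ℝ)+8)*x*y2*A*(x*P)| ≤ (4*(k:ℝ)+8)*(2*u)*((2*(k:ℝ)+8)*v*(u+v)^2) := by
    rw [abs_mul]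
    have hfront : |(4*(k:ℝ)+8)*x*y2*A| ≤ (4*(k:ℝ)+8)*(2*u) := by
      rw [abs_mul, abs_mul, abs_mul, abs_of_nonneg (by positivity : (0:ℝ) ≤ 4*(k:ℝ)+8),
        abs_of_nonneg hx0, abs_of_nonneg hy0, abs_of_nonneg hA0]
      have hxy2 : x*y2 ≤ 1 := by nlinarith
      calc (4*(k:ℝ)+8)*x*y2*A = (4*(k:ℝ)+8)*((x*y2)*A) := by ring
        _ ≤ (4*(k:ℝ)+8)*(1*(2*u)) := by
            refine mul_le_mul_of_nonneg_left (mul_le_mul hxy2 hA2 hA0 zero_le_one)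
              (by positivity)
        _ = (4*(k:ℝ)+8)*(2*u) := by ring
    exact mul_le_mul hfront hxP (abs_nonneg _) (by positivity)
  refine ((abs_add_le _ _).trans (add_le_add h1 h2)).trans ?_
  have hX1 : v*(u+v)^3 ≤ (u+v)^4 := by
    calc v*(u+v)^3 ≤ (u+v)*(u+v)^3 :=
          mul_le_mul_of_nonneg_right (by linarith) (by positivity)
      _ = (u+v)^4 := by ring
  have huv : u*v ≤ (u+v)*(u+v) := by nlinarith
  have hX2 : u*v*(u+v)^3 ≤ 2*(u+v)^4 := by
    calc u*v*(u+v)^3 ≤ ((u+v)*(u+v))*(u+v)^3 :=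
          mul_le_mul_of_nonneg_right huv (by positivity)
      _ = (u+v)*(u+v)^4 := by ring
      _ ≤ 2*(u+v)^4 := mul_le_mul_of_nonneg_right hs2 (by positivity)
  have hX3 : u*v*(u+v)^2 ≤ (u+v)^4 := by
    calc u*v*(u+v)^2 ≤ ((u+v)*(u+v))*(u+v)^2 :=
          mul_le_mul_of_nonneg_right huv (by positivity)
      _ = (u+v)^4 := by ring
  calc (4*((k:ℝ)+1)*((2*(k:ℝ)+8)*v*(u+v)^2)
          + 2*u*((2*(k:ℝ)+8)*v*(u+v)^2 + 2*((2*(k:ℝ)+8)*v*(u+v))))*(u+v)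
        + (4*(k:ℝ)+8)*(2*u)*((2*(k:ℝ)+8)*v*(u+v)^2)
      = (2*(k:ℝ)+8)*((4*(k:ℝ)+4)*(v*(u+v)^3) + 2*(u*v*(u+v)^3)
          + (4 + (8*(k:ℝ)+16))*(u*v*(u+v)^2)) := by ring
    _ ≤ (2*(k:ℝ)+8)*((4*(k:ℝ)+4)*((u+v)^4) + 2*(2*(u+v)^4)
          + (4 + (8*(k:ℝ)+16))*((u+v)^4)) := by
        refine mul_le_mul_of_nonneg_left (add_le_add (add_le_add ?_ ?_) ?_) (by positivity)
        · exact mul_le_mul_of_nonneg_left hX1 (by positivity)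
        · exact mul_le_mul_of_nonneg_left hX2 (by positivity)
        · exact mul_le_mul_of_nonneg_left hX3 (by positivity)
    _ = (2*(k:ℝ)+8)*(12*(k:ℝ)+28)*(u+v)^4 := by ring

lemma tt_bound (k : ℕ) (x y : ℝ) (hx : x ∈ Icc (0:ℝ) 1) (hy : y ∈ Icc (0:ℝ) 1) :
    |tt k x y| ≤ (2*(k:ℝ)+8)*(12*(k:ℝ)+28)*((1-x^2)+(1-y^2))^4 := by
  obtain ⟨hx0, hx1⟩ := hx
  obtain ⟨hy0, hy1⟩ := hy
  have a1 : (0:ℝ) ≤ y^2 := by positivity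
  have a2 : y^2 ≤ 1 := by nlinarith
  have a3 : (0:ℝ) ≤ 1-x^2 := by nlinarith
  have a3' : 1-x^2 ≤ 1 := by nlinarith
  have a4 : (0:ℝ) ≤ 1-y^2 := by nlinarith
  have a4' : 1-y^2 ≤ 1 := by nlinarith
  have a5 : (1-x^2)+(1-y^2) ≤ 2 := by nlinarith
  have a6 : (0:ℝ) ≤ 1-x^4 := by nlinarith
  have a7 : 1-x^4 ≤ 2*(1-x^2) := by nlinarith
  have a8 : (0:ℝ) ≤ 1-x^2*y^2 := by nlinarith
  have a9 : 1-x^2*y^2 ≤ (1-x^2)+(1-y^2) := by nlinarith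
  have h := tt_aux k x (y^2) (1-x^2) (1-y^2) (1-x^4) (1-x^2*y^2)
    (P3 k (1-x^2) (1-y^2)) (P3u k (1-x^2) (1-y^2))
    hx0 hx1 a1 a2 a3 a4 a5 a6 a7 a8 a9
    (P3_bound k _ _ a3 a3' a4 a4')
    (P3u_bound k _ _ a3 a3' a4 a4')
  unfold tt pp ppx
  exact h

lemma sqrt_pow_odd (u : ℝ) (hu : 0 ≤ u) (k : ℕ) : (√u)^(2*k+1) = u^k*√u := by
  have : (√u)^(2*k+1) = ((√u)^2)^k*√u := by ring
  rw [this, Real.sq_sqrt hu]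

lemma inv_sqrt_step (x y : ℝ) (hx : x ∈ Ico (0:ℝ) 1) (hy : y ∈ Ico (0:ℝ) 1) :
    (√(1-x^2))⁻¹ * (√(1-y^2))⁻¹ ≤ (√(1-x))⁻¹ * (√(1-y))⁻¹ := by
  obtain ⟨hx0, hx1⟩ := hx
  obtain ⟨hy0, hy1⟩ := hy
  have h1 : (0:ℝ) < 1-x := by linarith
  have h2 : (0:ℝ) < 1-y := by linarith
  have h3 : (1:ℝ)-x ≤ 1-x^2 := by nlinarith
  have h4 : (1:ℝ)-y ≤ 1-y^2 := by nlinarith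
  have s1 : (0:ℝ) < √(1-x) := Real.sqrt_pos.2 h1
  have s2 : (0:ℝ) < √(1-y) := Real.sqrt_pos.2 h2
  have m1 : √(1-x) ≤ √(1-x^2) := Real.sqrt_le_sqrt h3
  have m2 : √(1-y) ≤ √(1-y^2) := Real.sqrt_le_sqrt h4
  have i1 : (√(1-x^2))⁻¹ ≤ (√(1-x))⁻¹ := by
    exact inv_anti₀ s1 m1
  have i2 : (√(1-y^2))⁻¹ ≤ (√(1-y))⁻¹ := by
    exact inv_anti₀ s2 m2
  exact mul_le_mul i1 i2 (by positivity) (by positivity)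

lemma uv_div_bound (u v : ℝ) (k : ℕ) (hu : 0 < u) (hv : 0 < v) :
    u^k*v^k/(u+v)^(2*k+1) ≤ (√u*√v)⁻¹ := by
  have hs : (0:ℝ) < u+v := by linarith
  have hsq : (0:ℝ) < √u*√v := by positivity
  have e1 : u^k*v^k*(√u*√v) = (√u)^(2*k+1) * (√v)^(2*k+1) := by
    rw [sqrt_pow_odd u hu.le, sqrt_pow_odd v hv.le]; ring
  have e2 : (√u)^(2*k+1) * (√v)^(2*k+1) ≤ (u+v)^(2*k+1) := by
    rw [← mul_pow, ← Real.sqrt_mul hu.le]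
    refine pow_le_pow_left₀ (Real.sqrt_nonneg _) ?_ _
    have huv : u*v ≤ (u+v)^2 := by nlinarith
    calc √(u*v) ≤ √((u+v)^2) := Real.sqrt_le_sqrt huv
      _ = u+v := Real.sqrt_sq hs.le
  rw [show (√u*√v)⁻¹ = 1/(√u*√v) by rw [one_div]]
  rw [div_le_div_iff₀ (pow_pos hs _) hsq]
  calc u^k*v^k*(√u*√v) = (√u)^(2*k+1) * (√v)^(2*k+1) := e1
    _ ≤ (u+v)^(2*k+1) := e2
    _ = 1*(u+v)^(2*k+1) := (one_mul _).symm

lemma PX_bound' (k : ℕ) (x y : ℝ) (hx : x ∈ Ico (0:ℝ) 1) (hy : y ∈ Ico (0:ℝ) 1) :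
    |PX k x y| ≤ (4*2^(4*k+5)*((2*(k:ℝ)+8)*(12*(k:ℝ)+28)))
      * ((√(1-x))⁻¹ * (√(1-y))⁻¹) := by
  obtain ⟨hx0, hx1⟩ := hx
  obtain ⟨hy0, hy1⟩ := hy
  have hu : (0:ℝ) < 1-x^2 := by nlinarith
  have hv : (0:ℝ) < 1-y^2 := by nlinarith
  have hs : (0:ℝ) < (1-x^2)+(1-y^2) := by linarith
  have hD : ((1-x^2)+(1-y^2))/2 ≤ 1-x^2*y^2 := by nlinarith
  have hD0 : (0:ℝ) < 1-x^2*y^2 := by nlinarith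
  have hA0 : (0:ℝ) ≤ 1-x^4 := by nlinarith
  have hA2 : 1-x^4 ≤ 2*(1-x^2) := by nlinarith
  have hB0 : (0:ℝ) ≤ 1-y^4 := by nlinarith
  have hB2 : 1-y^4 ≤ 2*(1-y^2) := by nlinarith
  have habs : |PX k x y|
      = 4*((1-x^4)^k*(1-y^4)^k*|tt k x y|)/(1-x^2*y^2)^(2*k+5) := by
    unfold PX
    rw [abs_div, abs_mul, abs_mul, abs_mul, abs_pow, abs_pow, abs_pow,
      abs_of_nonneg hA0, abs_of_nonneg hB0, abs_of_nonneg hD0.le,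
      abs_of_nonneg (by norm_num : (0:ℝ) ≤ 4)]
  rw [habs]
  have step2 : 4*((1-x^4)^k*(1-y^4)^k*|tt k x y|)/(1-x^2*y^2)^(2*k+5)
      ≤ 4*((2*(1-x^2))^k*(2*(1-y^2))^k
          *((2*(k:ℝ)+8)*(12*(k:ℝ)+28)*((1-x^2)+(1-y^2))^4))
        /(((1-x^2)+(1-y^2))/2)^(2*k+5) := by
    refine div_le_div₀ (by positivity) ?_ (by positivity)
      (pow_le_pow_left₀ (by positivity) hD (2*k+5))
    refine mul_le_mul_of_nonneg_left ?_ (by norm_num)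
    refine mul_le_mul (mul_le_mul (pow_le_pow_left₀ hA0 hA2 k)
      (pow_le_pow_left₀ hB0 hB2 k) (by positivity) (by positivity))
      (tt_bound k x y ⟨hx0, hx1.le⟩ ⟨hy0, hy1.le⟩) (abs_nonneg _) (by positivity)
  refine step2.trans ?_
  have step3 : 4*((2*(1-x^2))^k*(2*(1-y^2))^k
          *((2*(k:ℝ)+8)*(12*(k:ℝ)+28)*((1-x^2)+(1-y^2))^4))
        /(((1-x^2)+(1-y^2))/2)^(2*k+5)
      = (4*2^(4*k+5)*((2*(k:ℝ)+8)*(12*(k:ℝ)+28)))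
        * ((1-x^2)^k*(1-y^2)^k/((1-x^2)+(1-y^2))^(2*k+1)) := by
    rw [div_pow, mul_pow, mul_pow]
    rw [show (4:ℕ)*k+5 = (2*k+5) + 2*k by ring]
    field_simp
    ring
  rw [step3]
  refine mul_le_mul_of_nonneg_left ?_ (by positivity)
  exact (uv_div_bound _ _ k hu hv).trans
    (by rw [mul_inv]; exact inv_sqrt_step x y ⟨hx0, hx1⟩ ⟨hy0, hy1⟩)

lemma gg_bound' (j : ℕ) (x y : ℝ) (hx : x ∈ Ico (0:ℝ) 1) (hy : y ∈ Ico (0:ℝ) 1) :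
    |gg j x y| ≤ (4*4^j) * ((√(1-x))⁻¹ * (√(1-y))⁻¹) := by
  obtain ⟨hx0, hx1⟩ := hx
  obtain ⟨hy0, hy1⟩ := hy
  have hu : (0:ℝ) < 1-x^2 := by nlinarith
  have hv : (0:ℝ) < 1-y^2 := by nlinarith
  have hD0 : (0:ℝ) < 1-x^2*y^2 := by nlinarith
  have hA0 : (0:ℝ) ≤ 1-x^4 := by nlinarith
  have hA2 : 1-x^4 ≤ 2*(1-x^2*y^2) := by nlinarith
  have hB0 : (0:ℝ) ≤ 1-y^4 := by nlinarith
  have hB2 : 1-y^4 ≤ 2*(1-x^2*y^2) := by nlinarith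
  have habs : |gg j x y| = 4*(1-x^4)^j*(1-y^4)^j/(1-x^2*y^2)^(2*j+1) := by
    unfold gg
    rw [abs_div, abs_mul, abs_mul, abs_pow, abs_pow, abs_pow,
      abs_of_nonneg hA0, abs_of_nonneg hB0, abs_of_nonneg hD0.le,
      abs_of_nonneg (by norm_num : (0:ℝ) ≤ 4)]
  rw [habs]
  have step2 : 4*(1-x^4)^j*(1-y^4)^j/(1-x^2*y^2)^(2*j+1)
      ≤ 4*(2*(1-x^2*y^2))^j*(2*(1-x^2*y^2))^j/(1-x^2*y^2)^(2*j+1) := by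
    refine div_le_div₀ (by positivity) ?_ (by positivity) le_rfl
    exact mul_le_mul (mul_le_mul_of_nonneg_left (pow_le_pow_left₀ hA0 hA2 j) (by norm_num))
      (pow_le_pow_left₀ hB0 hB2 j) (by positivity) (by positivity)
  refine step2.trans ?_
  have step3 : 4*(2*(1-x^2*y^2))^j*(2*(1-x^2*y^2))^j/(1-x^2*y^2)^(2*j+1)
      = (4*4^j)/(1-x^2*y^2) := by
    have h4 : (4:ℝ)^j = 2^j*2^j := by rw [← mul_pow]; norm_num
    rw [mul_pow, h4]
    field_simp
    ring
  rw [step3]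
  have hDge : √(1-x^2)*√(1-y^2) ≤ 1-x^2*y^2 := by
    rw [← Real.sqrt_mul hu.le]
    have huv : (1-x^2)*(1-y^2) ≤ (1-x^2*y^2)^2 := by
      nlinarith [mul_nonneg (mul_nonneg (sq_nonneg x) hv.le) hD0.le,
        mul_nonneg (mul_nonneg (sq_nonneg y) hu.le) hu.le]
    calc √((1-x^2)*(1-y^2)) ≤ √((1-x^2*y^2)^2) := Real.sqrt_le_sqrt huv
      _ = 1-x^2*y^2 := Real.sqrt_sq hD0.le
  have h1 : (1-x^2*y^2)⁻¹ ≤ (√(1-x^2)*√(1-y^2))⁻¹ :=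
    inv_anti₀ (by positivity) hDge
  calc (4*4^j)/(1-x^2*y^2) = (4*4^j)*(1-x^2*y^2)⁻¹ := by rw [div_eq_mul_inv]
    _ ≤ (4*4^j)*((√(1-x^2)*√(1-y^2))⁻¹) := by
        refine mul_le_mul_of_nonneg_left h1 (by positivity)
    _ ≤ (4*(4:ℝ)^j) * ((√(1-x))⁻¹ * (√(1-y))⁻¹) := by
        refine mul_le_mul_of_nonneg_left ?_ (by positivity)
        rw [mul_inv]
        exact inv_sqrt_step x y ⟨hx0, hx1⟩ ⟨hy0, hy1⟩

lemma integrable_inv_sqrt : IntegrableOn (fun x : ℝ => (√(1-x))⁻¹) (Icc 0 1) volume := by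
  have h1 : IntervalIntegrable (fun x : ℝ => x ^ (-(1/2) : ℝ)) volume 0 1 :=
    intervalIntegral.intervalIntegrable_rpow' (by norm_num)
  have h2 : IntervalIntegrable (fun x : ℝ => (1-x) ^ (-(1/2) : ℝ)) volume 0 1 := by
    have := (h1.comp_sub_left 1).symm
    simpa using this
  have h3 : IntegrableOn (fun x : ℝ => (1-x) ^ (-(1/2) : ℝ)) (Icc 0 1) volume := by
    rw [intervalIntegrable_iff, uIoc_of_le zero_le_one] at h2
    exact (integrableOn_Icc_iff_integrableOn_Ioc).mpr h2
  refine h3.congr_fun ?_ measurableSet_Icc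
  intro x hx
  have hx1 : (0:ℝ) ≤ 1 - x := by linarith [hx.2]
  show (1-x) ^ (-(1/2) : ℝ) = (√(1-x))⁻¹
  rw [Real.sqrt_eq_rpow, ← Real.rpow_neg hx1]

lemma integrable_dom (c : ℝ) :
    Integrable (fun z : ℝ×ℝ => c*((√(1-z.1))⁻¹*(√(1-z.2))⁻¹))
      ((volume.restrict (Icc (0:ℝ) 1)).prod (volume.restrict (Icc (0:ℝ) 1))) :=
  (integrable_inv_sqrt.mul_prod integrable_inv_sqrt).const_mul c

lemma meas_PX (k : ℕ) : Measurable (fun z : ℝ×ℝ => PX k z.1 z.2) := by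
  unfold PX tt pp ppx P3 P3u
  fun_prop

lemma meas_PXswap (k : ℕ) : Measurable (fun z : ℝ×ℝ => PX k z.2 z.1) := by
  unfold PX tt pp ppx P3 P3u
  fun_prop

lemma meas_gg (j : ℕ) : Measurable (fun z : ℝ×ℝ => gg j z.1 z.2) := by
  unfold gg
  fun_prop

lemma ae_Ico :
    ∀ᵐ z : ℝ×ℝ ∂((volume.restrict (Icc (0:ℝ) 1)).prod (volume.restrict (Icc (0:ℝ) 1))),
      z.1 ∈ Ico (0:ℝ) 1 ∧ z.2 ∈ Ico (0:ℝ) 1 := by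
  have hmeas : ((volume.restrict (Icc (0:ℝ) 1)).prod (volume.restrict (Icc (0:ℝ) 1)))
      = (volume : Measure (ℝ×ℝ)).restrict (Icc (0:ℝ) 1 ×ˢ Icc (0:ℝ) 1) := by
    rw [Measure.volume_eq_prod, Measure.prod_restrict]
  rw [hmeas]
  have h1 : ∀ᵐ z : ℝ×ℝ ∂(volume : Measure (ℝ×ℝ)).restrict (Icc (0:ℝ) 1 ×ˢ Icc (0:ℝ) 1),
      z ∈ Icc (0:ℝ) 1 ×ˢ Icc (0:ℝ) 1 :=
    ae_restrict_mem (measurableSet_Icc.prod measurableSet_Icc)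
  have hn1 : (volume : Measure (ℝ×ℝ)) {z : ℝ×ℝ | z.1 = 1} = 0 := by
    have : {z : ℝ×ℝ | z.1 = 1} = ({1} : Set ℝ) ×ˢ (univ : Set ℝ) := by
      ext ⟨a,b⟩; simp [eq_comm]
    rw [this, Measure.volume_eq_prod, Measure.prod_prod, Real.volume_singleton, zero_mul]
  have hn2 : (volume : Measure (ℝ×ℝ)) {z : ℝ×ℝ | z.2 = 1} = 0 := by
    have : {z : ℝ×ℝ | z.2 = 1} = (univ : Set ℝ) ×ˢ ({1} : Set ℝ) := by
      ext ⟨a,b⟩; simp [eq_comm]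
    rw [this, Measure.volume_eq_prod, Measure.prod_prod, Real.volume_singleton, mul_zero]
  have h2 : ∀ᵐ z : ℝ×ℝ ∂(volume : Measure (ℝ×ℝ)), ¬ z.1 = 1 := by
    rw [ae_iff]; simpa using hn1
  have h3 : ∀ᵐ z : ℝ×ℝ ∂(volume : Measure (ℝ×ℝ)), ¬ z.2 = 1 := by
    rw [ae_iff]; simpa using hn2
  filter_upwards [h1, ae_restrict_of_ae h2, ae_restrict_of_ae h3] with z hz hz1 hz2
  obtain ⟨⟨ha, hb⟩, ⟨hc, hd⟩⟩ := hz
  exact ⟨⟨ha, lt_of_le_of_ne hb hz1⟩, ⟨hc, lt_of_le_of_ne hd hz2⟩⟩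

lemma int_PX (k : ℕ) :
    Integrable (fun z : ℝ×ℝ => PX k z.1 z.2)
      ((volume.restrict (Icc (0:ℝ) 1)).prod (volume.restrict (Icc (0:ℝ) 1))) := by
  refine (integrable_dom (4*2^(4*k+5)*((2*(k:ℝ)+8)*(12*(k:ℝ)+28)))).mono
    (meas_PX k).aestronglyMeasurable ?_
  filter_upwards [ae_Ico] with z hz
  rw [Real.norm_eq_abs, Real.norm_eq_abs]
  refine (PX_bound' k z.1 z.2 hz.1 hz.2).trans (le_abs_self _)

lemma int_PXswap (k : ℕ) :
    Integrable (fun z : ℝ×ℝ => PX k z.2 z.1)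
      ((volume.restrict (Icc (0:ℝ) 1)).prod (volume.restrict (Icc (0:ℝ) 1))) := by
  refine (integrable_dom (4*2^(4*k+5)*((2*(k:ℝ)+8)*(12*(k:ℝ)+28)))).mono
    (meas_PXswap k).aestronglyMeasurable ?_
  filter_upwards [ae_Ico] with z hz
  rw [Real.norm_eq_abs, Real.norm_eq_abs]
  refine le_trans ?_ (le_abs_self _)
  have h := PX_bound' k z.2 z.1 hz.2 hz.1
  calc |PX k z.2 z.1| ≤ (4*2^(4*k+5)*((2*(k:ℝ)+8)*(12*(k:ℝ)+28)))
        * ((√(1-z.2))⁻¹ * (√(1-z.1))⁻¹) := h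
    _ = (4*2^(4*k+5)*((2*(k:ℝ)+8)*(12*(k:ℝ)+28)))
        * ((√(1-z.1))⁻¹ * (√(1-z.2))⁻¹) := by ring

lemma int_gg (j : ℕ) :
    Integrable (fun z : ℝ×ℝ => gg j z.1 z.2)
      ((volume.restrict (Icc (0:ℝ) 1)).prod (volume.restrict (Icc (0:ℝ) 1))) := by
  refine (integrable_dom (4*4^j)).mono (meas_gg j).aestronglyMeasurable ?_
  filter_upwards [ae_Ico] with z hz
  rw [Real.norm_eq_abs, Real.norm_eq_abs]
  exact (gg_bound' j z.1 z.2 hz.1 hz.2).trans (le_abs_self _)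

lemma sliceFTC (k : ℕ) (y : ℝ) (hy : y ∈ Ico (0:ℝ) 1) :
    ∫ x in Icc (0:ℝ) 1, PX k x y = 0 := by
  obtain ⟨hy0, hy1⟩ := hy
  have hD : ∀ t ∈ uIcc (0:ℝ) 1, (1:ℝ) - t^2*y^2 ≠ 0 := by
    intro t ht
    rw [uIcc_of_le zero_le_one] at ht
    obtain ⟨ht0, ht1⟩ := ht
    have ht2 : t^2 ≤ 1 := by nlinarith
    have hy2 : y^2 < 1 := by nlinarith
    have hp : t^2*y^2 ≤ y^2 := by nlinarith [sq_nonneg y]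
    intro hzero
    linarith
  have hderiv : ∀ t ∈ uIcc (0:ℝ) 1, HasDerivAt (fun x => PP k x y) (PX k t y) t :=
    fun t ht => hasDerivAt_PP k y t (hD t ht)
  have hnum : Continuous fun x : ℝ => 4*((1-x^4)^k*(1-y^4)^k*tt k x y) := by
    unfold tt pp ppx P3 P3u
    fun_prop
  have hden : Continuous fun x : ℝ => (1-x^2*y^2)^(2*k+5) := by fun_prop
  have hcont : ContinuousOn (fun x => PX k x y) (uIcc (0:ℝ) 1) := by
    unfold PX
    exact ContinuousOn.div hnum.continuousOn hden.continuousOn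
      (fun t ht => pow_ne_zero _ (hD t ht))
  rw [integral_Icc_eq_integral_Ioc, ← intervalIntegral.integral_of_le zero_le_one,
    intervalIntegral.integral_eq_sub_of_hasDerivAt hderiv hcont.intervalIntegrable]
  have e1 : PP k 1 y = 0 := by norm_num [PP]
  have e0 : PP k 0 y = 0 := by norm_num [PP, pp, P3]
  rw [e1, e0, sub_zero]

lemma ae_y_Ico :
    ∀ᵐ y : ℝ ∂(volume.restrict (Icc (0:ℝ) 1)), y ∈ Ico (0:ℝ) 1 := by
  have h1 : ∀ᵐ y : ℝ ∂(volume.restrict (Icc (0:ℝ) 1)), y ∈ Icc (0:ℝ) 1 :=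
    ae_restrict_mem measurableSet_Icc
  have h2 : ∀ᵐ y : ℝ ∂(volume : Measure ℝ), ¬ y = 1 := by
    rw [ae_iff]; simpa using (Real.volume_singleton (a := 1))
  filter_upwards [h1, ae_restrict_of_ae h2] with y hy hy1
  exact ⟨hy.1, lt_of_le_of_ne hy.2 hy1⟩

lemma zero_PX (k : ℕ) :
    ∫ z : ℝ×ℝ, PX k z.1 z.2
      ∂((volume.restrict (Icc (0:ℝ) 1)).prod (volume.restrict (Icc (0:ℝ) 1))) = 0 := by
  rw [integral_prod_symm _ (int_PX k)]
  have : ∀ᵐ y : ℝ ∂(volume.restrict (Icc (0:ℝ) 1)),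
      (∫ x in Icc (0:ℝ) 1, PX k x y) = 0 := by
    filter_upwards [ae_y_Ico] with y hy
    exact sliceFTC k y hy
  rw [integral_congr_ae this, integral_zero]

lemma zero_PXswap (k : ℕ) :
    ∫ z : ℝ×ℝ, PX k z.2 z.1
      ∂((volume.restrict (Icc (0:ℝ) 1)).prod (volume.restrict (Icc (0:ℝ) 1))) = 0 := by
  rw [integral_prod _ (int_PXswap k)]
  have : ∀ᵐ x : ℝ ∂(volume.restrict (Icc (0:ℝ) 1)),
      (∫ y in Icc (0:ℝ) 1, PX k y x) = 0 := by
    filter_upwards [ae_y_Ico] with x hx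
    exact sliceFTC k x hx
  rw [integral_congr_ae this, integral_zero]

/-- Three-term recurrence for the Apéry-like numbers
`J₂(m) = ∫_{[0,1]²} 4(1-u₁⁴)ᵐ(1-u₂⁴)ᵐ/(1-u₁²u₂²)^{2m+1} du₁du₂`:
`4m² J₂(m) - (8m² - 8m + 3) J₂(m-1) + 4(m-1)² J₂(m-2) = 0` for `m ≥ 2`. -/
theorem stmt_13 (J : ℕ → ℝ)
    (hJ : ∀ m : ℕ, J m =
      ∫ p in (Set.Icc (0 : ℝ) 1 ×ˢ Set.Icc (0 : ℝ) 1),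
        4 * (1 - p.1 ^ 4) ^ m * (1 - p.2 ^ 4) ^ m / (1 - p.1 ^ 2 * p.2 ^ 2) ^ (2 * m + 1)) :
    ∀ m : ℕ, 2 ≤ m →
      4 * (m : ℝ) ^ 2 * J m - (8 * (m : ℝ) ^ 2 - 8 * m + 3) * J (m - 1)
        + 4 * ((m : ℝ) - 1) ^ 2 * J (m - 2) = 0 := by
  intro m hm
  obtain ⟨k, rfl⟩ : ∃ k, m = k + 2 := ⟨m - 2, by omega⟩
  have e1 : k + 2 - 1 = k + 1 := rfl
  have e2 : k + 2 - 2 = k := rfl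
  rw [e1, e2, hJ (k+2), hJ (k+1), hJ k]
  have hmeas : (volume : Measure (ℝ×ℝ)).restrict (Icc (0:ℝ) 1 ×ˢ Icc (0:ℝ) 1)
      = ((volume.restrict (Icc (0:ℝ) 1)).prod (volume.restrict (Icc (0:ℝ) 1))) := by
    rw [Measure.volume_eq_prod, Measure.prod_restrict]
  rw [hmeas]
  set μ2 := ((volume.restrict (Icc (0:ℝ) 1)).prod (volume.restrict (Icc (0:ℝ) 1))) with hμ2
  have hint : ∀ j : ℕ, Integrable
      (fun z : ℝ×ℝ => 4 * (1 - z.1 ^ 4) ^ j * (1 - z.2 ^ 4) ^ j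
        / (1 - z.1 ^ 2 * z.2 ^ 2) ^ (2 * j + 1)) μ2 := fun j => int_gg j
  have key : ∫ z : ℝ×ℝ, (4*((k:ℝ)+2)^2 * gg (k+2) z.1 z.2
      - (8*((k:ℝ)+2)^2 - 8*((k:ℝ)+2) + 3) * gg (k+1) z.1 z.2
      + 4*((k:ℝ)+1)^2 * gg k z.1 z.2) ∂μ2 = 0 := by
    have hae : ∀ᵐ z : ℝ×ℝ ∂μ2, (4*((k:ℝ)+2)^2 * gg (k+2) z.1 z.2
        - (8*((k:ℝ)+2)^2 - 8*((k:ℝ)+2) + 3) * gg (k+1) z.1 z.2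
        + 4*((k:ℝ)+1)^2 * gg k z.1 z.2) = PX k z.1 z.2 + PX k z.2 z.1 := by
      filter_upwards [ae_Ico] with z hz
      obtain ⟨⟨hx0, hx1⟩, ⟨hy0, hy1⟩⟩ := hz
      have hx2 : z.1^2 ≤ 1 := by nlinarith
      have hy2 : z.2^2 < 1 := by nlinarith
      have hp : z.1^2*z.2^2 ≤ z.2^2 := by nlinarith [sq_nonneg z.2]
      have hD : (1:ℝ) - z.1^2*z.2^2 ≠ 0 := by
        intro hzero
        linarith
      exact (certificate k z.1 z.2 hD).symm
    rw [integral_congr_ae hae, integral_add (int_PX k) (int_PXswap k),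
      zero_PX k, zero_PXswap k, add_zero]
  have expand : ∫ z : ℝ×ℝ, (4*((k:ℝ)+2)^2 * gg (k+2) z.1 z.2
      - (8*((k:ℝ)+2)^2 - 8*((k:ℝ)+2) + 3) * gg (k+1) z.1 z.2
      + 4*((k:ℝ)+1)^2 * gg k z.1 z.2) ∂μ2
      = 4*((k:ℝ)+2)^2 * (∫ z : ℝ×ℝ, gg (k+2) z.1 z.2 ∂μ2)
        - (8*((k:ℝ)+2)^2 - 8*((k:ℝ)+2) + 3) * (∫ z : ℝ×ℝ, gg (k+1) z.1 z.2 ∂μ2)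
        + 4*((k:ℝ)+1)^2 * (∫ z : ℝ×ℝ, gg k z.1 z.2 ∂μ2) := by
    have iA : Integrable (fun z : ℝ×ℝ => 4*((k:ℝ)+2)^2 * gg (k+2) z.1 z.2
        - (8*((k:ℝ)+2)^2 - 8*((k:ℝ)+2) + 3) * gg (k+1) z.1 z.2) μ2 := by
      exact ((int_gg (k+2)).const_mul _).sub ((int_gg (k+1)).const_mul _)
    have iB : Integrable (fun z : ℝ×ℝ => 4*((k:ℝ)+1)^2 * gg k z.1 z.2) μ2 := by
      exact (int_gg k).const_mul _
    have iC : Integrable (fun z : ℝ×ℝ => 4*((k:ℝ)+2)^2 * gg (k+2) z.1 z.2) μ2 := by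
      exact (int_gg (k+2)).const_mul _
    have iD : Integrable (fun z : ℝ×ℝ =>
        (8*((k:ℝ)+2)^2 - 8*((k:ℝ)+2) + 3) * gg (k+1) z.1 z.2) μ2 := by
      exact (int_gg (k+1)).const_mul _
    rw [integral_add iA iB, integral_sub iC iD]
    congr 1
    · congr 1
      · exact integral_const_mul (4*((k:ℝ)+2)^2) (fun z : ℝ×ℝ => gg (k+2) z.1 z.2) (μ := μ2)
      · exact integral_const_mul (8*((k:ℝ)+2)^2 - 8*((k:ℝ)+2) + 3)
          (fun z : ℝ×ℝ => gg (k+1) z.1 z.2) (μ := μ2)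
    · exact integral_const_mul (4*((k:ℝ)+1)^2) (fun z : ℝ×ℝ => gg k z.1 z.2) (μ := μ2)
  rw [expand] at key
  have hgg : ∀ j : ℕ, (∫ z : ℝ×ℝ, gg j z.1 z.2 ∂μ2)
      = ∫ z : ℝ×ℝ, 4 * (1 - z.1 ^ 4) ^ j * (1 - z.2 ^ 4) ^ j
          / (1 - z.1 ^ 2 * z.2 ^ 2) ^ (2 * j + 1) ∂μ2 := by
    intro j; rfl
  rw [hgg (k+2), hgg (k+1), hgg k] at key
  push_cast
  have c1 : ((k:ℝ) + 2 - 1)^2 = ((k:ℝ)+1)^2 := by ring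
  rw [c1]
  linarith [key]
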